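/- Assume the weight matrix ω is symmetric, and let x : ℝ → ℝ^N be a solution of the autonomous Hopfield network. Then the energy E is differentiable along the trajectory with (d/dt) E(x(t)) = −Σ_{i=1}^N F'(x_i(t))·(u_i(x(t)))² ≤ 0 for all t; in particular, the function t ↦ E(x(t)) is nonincreasing. -/

import Mathlib

open Real

noncomputable def F (lam s : ℝ) : ℝ := (2 / Real.pi) * Real.arctan (lam * Real.pi * s / 2)

noncomputable def Fd (lam s : ℝ) : ℝ := lam / (1 + (lam * Real.pi * s / 2) ^ 2)

noncomputable def G (lam s : ℝ) : ℝ := (2 / (lam * Real.pi ^ 2)) * Real.log (1 + (lam * Real.pi * s / 2) ^ 2)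

noncomputable def u (N : ℕ) (lam g : ℝ) (ω : Fin N → Fin N → ℝ) (x : Fin N → ℝ) (i : Fin N) : ℝ :=
  -x i + g * ∑ j, F lam (ω i j) * F lam (x j)

noncomputable def E (N : ℕ) (lam g : ℝ) (ω : Fin N → Fin N → ℝ) (x : Fin N → ℝ) : ℝ :=
  ∑ i, G lam (x i) - (g / 2) * ∑ i, ∑ j, F lam (ω i j) * F lam (x i) * F lam (x j)

lemma hasDerivAt_F' (lam s : ℝ) : HasDerivAt (F lam) (Fd lam s) s := by
  have hπ : Real.pi ≠ 0 := Real.pi_ne_zero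
  have hy : HasDerivAt (fun s : ℝ => lam * Real.pi * s / 2) (lam * Real.pi / 2) s := by
    simpa using ((hasDerivAt_id s).const_mul (lam * Real.pi)).div_const 2
  have h2 := ((Real.hasDerivAt_arctan (lam * Real.pi * s / 2)).comp s hy).const_mul (2 / Real.pi)
  refine h2.congr_deriv ?_
  have hd : (1 + (lam * Real.pi * s / 2) ^ 2) ≠ 0 := by positivity
  unfold Fd
  field_simp

lemma hasDerivAt_G' (lam s : ℝ) (hlam : 0 < lam) :
    HasDerivAt (G lam) (s * Fd lam s) s := by
  have hπ : Real.pi ≠ 0 := Real.pi_ne_zero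
  have hy : HasDerivAt (fun s : ℝ => lam * Real.pi * s / 2) (lam * Real.pi / 2) s := by
    simpa using ((hasDerivAt_id s).const_mul (lam * Real.pi)).div_const 2
  have hin : HasDerivAt (fun s : ℝ => 1 + (lam * Real.pi * s / 2) ^ 2)
      (2 * (lam * Real.pi * s / 2) ^ 1 * (lam * Real.pi / 2)) s := (hy.pow 2).const_add 1
  have hpos : (0:ℝ) < 1 + (lam * Real.pi * s / 2) ^ 2 := by positivity
  have h2 := ((Real.hasDerivAt_log hpos.ne').comp s hin).const_mul (2 / (lam * Real.pi ^ 2))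
  refine h2.congr_deriv ?_
  have hd : (1 + (lam * Real.pi * s / 2) ^ 2) ≠ 0 := hpos.ne'
  unfold Fd
  field_simp

/-- For symmetric ω, along any solution the energy is differentiable with
(d/dt)E(x(t)) = −Σ_i F'(x_i(t))·u_i(x(t))² ≤ 0; hence t ↦ E(x(t)) is nonincreasing. -/
theorem hopfield_energy_decreases (N : ℕ) (hN : 1 ≤ N) (lam g : ℝ)
    (hlam : 0 < lam) (hg : 0 < g) (ω : Fin N → Fin N → ℝ)
    (hsym : ∀ i j, ω i j = ω j i)
    (x : ℝ → Fin N → ℝ)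
    (hsol : ∀ (t : ℝ) (i : Fin N), HasDerivAt (fun s => x s i) (u N lam g ω (x t) i) t) :
    (∀ t : ℝ,
      HasDerivAt (fun s => E N lam g ω (x s))
        (-(∑ i, Fd lam (x t i) * (u N lam g ω (x t) i) ^ 2)) t ∧
      -(∑ i, Fd lam (x t i) * (u N lam g ω (x t) i) ^ 2) ≤ 0) ∧
    Antitone (fun t => E N lam g ω (x t)) := by
  have hD : ∀ t, HasDerivAt (fun s => E N lam g ω (x s))
      (-(∑ i, Fd lam (x t i) * (u N lam g ω (x t) i) ^ 2)) t := by
    intro t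
    have hF : ∀ i : Fin N, HasDerivAt (fun s => F lam (x s i))
        (Fd lam (x t i) * u N lam g ω (x t) i) t :=
      fun i => by have := (hasDerivAt_F' lam (x t i)).comp t (hsol t i); exact this
    have hG : ∀ i : Fin N, HasDerivAt (fun s => G lam (x s i))
        ((x t i * Fd lam (x t i)) * u N lam g ω (x t) i) t :=
      fun i => by have := (hasDerivAt_G' lam (x t i) hlam).comp t (hsol t i); exact this
    have h1 : HasDerivAt (fun s => ∑ i, G lam (x s i))
        (∑ i, (x t i * Fd lam (x t i)) * u N lam g ω (x t) i) t :=
      HasDerivAt.fun_sum (fun i _ => hG i)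
    have h2 : HasDerivAt (fun s => ∑ i, ∑ j, F lam (ω i j) * F lam (x s i) * F lam (x s j))
        (∑ i, ∑ j, (F lam (ω i j) * (Fd lam (x t i) * u N lam g ω (x t) i) * F lam (x t j)
          + F lam (ω i j) * F lam (x t i) * (Fd lam (x t j) * u N lam g ω (x t) j))) t := by
      apply HasDerivAt.fun_sum; intro i _
      apply HasDerivAt.fun_sum; intro j _
      exact ((hF i).const_mul (F lam (ω i j))).mul (hF j)
    have hE := h1.sub (h2.const_mul (g/2))
    have hfun : (fun s => E N lam g ω (x s)) =
        (fun s => (∑ i, G lam (x s i)) - (g/2) * ∑ i, ∑ j, F lam (ω i j) * F lam (x s i) * F lam (x s j)) := rfl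
    rw [hfun]
    refine hE.congr_deriv ?_
    -- derivative equality
    have hswap : ∑ i, ∑ j, F lam (ω i j) * F lam (x t i) * (Fd lam (x t j) * u N lam g ω (x t) j)
        = ∑ i, ∑ j, F lam (ω i j) * (Fd lam (x t i) * u N lam g ω (x t) i) * F lam (x t j) := by
      rw [Finset.sum_comm]
      refine Finset.sum_congr rfl fun i _ => Finset.sum_congr rfl fun j _ => ?_
      rw [hsym j i]; ring
    rw [Finset.sum_congr rfl (fun i _ => Finset.sum_add_distrib), Finset.sum_add_distrib, hswap]
    have : ∀ i : Fin N, -(Fd lam (x t i) * (u N lam g ω (x t) i) ^ 2)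
        = (x t i * Fd lam (x t i)) * u N lam g ω (x t) i
          - g * ∑ j, F lam (ω i j) * (Fd lam (x t i) * u N lam g ω (x t) i) * F lam (x t j) := by
      intro i
      have hu : u N lam g ω (x t) i = -x t i + g * ∑ j, F lam (ω i j) * F lam (x t j) := rfl
      have hS : ∑ j, F lam (ω i j) * (Fd lam (x t i) * u N lam g ω (x t) i) * F lam (x t j)
          = (Fd lam (x t i) * u N lam g ω (x t) i) * ∑ j, F lam (ω i j) * F lam (x t j) := by
        rw [Finset.mul_sum]
        exact Finset.sum_congr rfl fun j _ => by ring
      rw [hS, hu]; ring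
    rw [← Finset.sum_neg_distrib, Finset.sum_congr rfl fun i _ => this i,
      Finset.sum_sub_distrib, ← Finset.mul_sum]
    ring
  have hnp : ∀ t, -(∑ i, Fd lam (x t i) * (u N lam g ω (x t) i) ^ 2) ≤ 0 := by
    intro t
    have h0 : 0 ≤ ∑ i, Fd lam (x t i) * (u N lam g ω (x t) i) ^ 2 :=
      Finset.sum_nonneg fun i _ => mul_nonneg (by unfold Fd; positivity) (sq_nonneg _)
    linarith
  refine ⟨fun t => ⟨hD t, hnp t⟩, ?_⟩
  apply antitone_of_deriv_nonpos
  · exact fun t => (hD t).differentiableAt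
  · intro t; rw [(hD t).deriv]; exact hnp t
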